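/- Let e ≥ 1, f > e, let F be a proper affine flat in ℝ^(binom(e+2,2)−1), and let A ⊆ ℝ^2 with |A| = binom(f+2,2) such that A is not contained in any curve of degree at most f. Then |ψ_e(A) ∩ F| ≤ binom(f+2,2) − binom(f−e+2,2) − binom(e+2,2) + 2 + dim F. -/

import Mathlib

open scoped Classical

noncomputable section

/-- The zero set in `ℝ × ℝ` of a polynomial in two variables. -/
def zeroSet (p : MvPolynomial (Fin 2) ℝ) : Set (ℝ × ℝ) :=
  {x | MvPolynomial.eval ![x.1, x.2] p = 0}

/-- `C` is a curve of degree `e`: the zero set of a polynomial of total degree `e`. -/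
def IsCurve (e : ℕ) (C : Set (ℝ × ℝ)) : Prop :=
  ∃ p : MvPolynomial (Fin 2) ℝ, p.totalDegree = e ∧ C = zeroSet p

/-- `C` is a curve of degree at most `d` (and at least `1`). -/
def IsCurveLe (d : ℕ) (C : Set (ℝ × ℝ)) : Prop :=
  ∃ e, 1 ≤ e ∧ e ≤ d ∧ IsCurve e C

/-- Index set for the `d`-Veronese map: pairs `(n, m)` with `1 ≤ n + m ≤ d`.
It has `(d+2).choose 2 - 1` elements. -/
abbrev VIdx (d : ℕ) : Type :=
  {q : Fin (d + 1) × Fin (d + 1) // 1 ≤ (q.1 : ℕ) + (q.2 : ℕ) ∧ (q.1 : ℕ) + (q.2 : ℕ) ≤ d}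

/-- The `d`-Veronese map `ℝ² → ℝ^((d+2).choose 2 - 1)`. -/
def vero (d : ℕ) (a : ℝ × ℝ) : VIdx d → ℝ :=
  fun q => a.1 ^ (q.1.1 : ℕ) * a.2 ^ (q.1.2 : ℕ)

/-- Dimension of the affine hull of a set. -/
noncomputable def adim {α : Type*} (S : Set (α → ℝ)) : ℕ :=
  Module.finrank ℝ (affineSpan ℝ S).direction

/-- Dimension of an affine subspace. -/
noncomputable def fdim {α : Type*} (F : AffineSubspace ℝ (α → ℝ)) : ℕ :=
  Module.finrank ℝ F.direction

/-! ### Auxiliary counting lemmas -/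

namespace Stmt7Aux

open Finset MvPolynomial

lemma choose_step (m : ℕ) : (m+3).choose 2 = (m+2).choose 2 + (m+2) := by
  have h := Nat.choose_succ_succ (m+2) 1
  rw [Nat.choose_one_right] at h
  norm_num at h
  rw [show m+2+1 = m+3 by ring] at h
  omega

lemma choose_arith (g t : ℕ) : (g + t + 2).choose 2 + 1 = (g+2).choose 2 + (t+2).choose 2 + t * g := by
  induction t with
  | zero => simp
  | succ t ih =>
    have h1 : g + (t+1) + 2 = (g + t) + 3 := by ring
    have h2 : t + 1 + 2 = t + 3 := by ring
    have h3 : (t+1) * g = t * g + g := by ring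
    rw [h1, h2, choose_step, choose_step]
    omega

lemma sum_choose (n : ℕ) : (n+2).choose 2 = ∑ i ∈ range (n+1), (i+1) := by
  induction n with
  | zero => simp
  | succ n ih =>
    rw [Finset.sum_range_succ, ← ih]
    have h1 : n + 1 + 2 = n + 3 := by ring
    rw [h1, choose_step]

/-- the counting Finset -/
def pairsLe (n : ℕ) : Finset (ℕ × ℕ) := (range (n+1) ×ˢ range (n+1)).filter (fun q => q.1 + q.2 ≤ n)

lemma mem_pairsLe {n : ℕ} {q : ℕ × ℕ} : q ∈ pairsLe n ↔ q.1 + q.2 ≤ n := by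
  simp only [pairsLe, Finset.mem_filter, Finset.mem_product, Finset.mem_range]
  omega

lemma card_pairsLe (n : ℕ) : (pairsLe n).card = (n+2).choose 2 := by
  have heq : pairsLe n = (range (n+1)).biUnion
      (fun a => (range (n+1-a)).image (fun b => (a,b))) := by
    ext q
    simp only [mem_pairsLe, Finset.mem_biUnion, Finset.mem_image, Finset.mem_range]
    constructor
    · rintro h
      exact ⟨q.1, by omega, q.2, by omega, rfl⟩
    · rintro ⟨a, ha, b, hb, rfl⟩
      simpa using by omega
  rw [heq, Finset.card_biUnion]
  · have h1 : ∀ a ∈ range (n+1), ((range (n+1-a)).image (fun b => (a,b))).card = n+1-a := by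
      intro a _
      rw [Finset.card_image_of_injective _ (fun x y h => (Prod.mk.injEq _ _ _ _ ▸ h).2 ▸ rfl)]
      · exact Finset.card_range _
    rw [Finset.sum_congr rfl h1]
    have h2 := Finset.sum_range_reflect (fun a => n + 1 - a) (n+1)
    rw [sum_choose, ← h2]
    apply Finset.sum_congr rfl
    intro j hj
    simp only [Finset.mem_range] at hj
    omega
  · intro a _ b _ hab
    simp only [Finset.disjoint_left, Finset.mem_image, Finset.mem_range]
    rintro q ⟨x, hx, rfl⟩ ⟨y, hy, h⟩
    exact hab (by simpa using (Prod.mk.injEq _ _ _ _ ▸ h).1 ▸ rfl)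

lemma sum_fin2 (s : Fin 2 →₀ ℕ) : (s.sum fun _ e => e) = s 0 + s 1 := by
  rw [Finsupp.sum_fintype _ _ (fun _ => rfl), Fin.sum_univ_two]

noncomputable def degEquiv (m : ℕ) :
    {n : Fin 2 →₀ ℕ | (n.sum fun _ e => e) ≤ m} ≃ ↑(pairsLe m) where
  toFun s := ⟨(s.1 0, s.1 1), mem_pairsLe.mpr (by have := s.2; rwa [Set.mem_setOf_eq, sum_fin2] at this)⟩
  invFun q := ⟨Finsupp.single 0 q.1.1 + Finsupp.single 1 q.1.2, by
    have := mem_pairsLe.mp q.2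
    simp only [Set.mem_setOf_eq, sum_fin2]
    simpa using this⟩
  left_inv s := by
    ext i
    fin_cases i <;> simp
  right_inv q := by
    ext <;> simp

noncomputable instance (m : ℕ) : Fintype {n : Fin 2 →₀ ℕ | (n.sum fun _ e => e) ≤ m} :=
  Fintype.ofEquiv _ (degEquiv m).symm

lemma finrank_rtd (m : ℕ) :
    Module.finrank ℝ (restrictTotalDegree (Fin 2) ℝ m) = (m+2).choose 2 := by
  rw [restrictTotalDegree, Module.finrank_eq_card_basis (basisRestrictSupport ℝ _),
    Fintype.card_congr (degEquiv m), Fintype.card_coe, card_pairsLe]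

def pairs1 (n : ℕ) : Finset (ℕ × ℕ) := (pairsLe n).erase (0,0)

lemma card_pairs1 (n : ℕ) : (pairs1 n).card + 1 = (n+2).choose 2 := by
  rw [pairs1, Finset.card_erase_of_mem (mem_pairsLe.mpr (by simp)), card_pairsLe]
  have : 1 ≤ (n+2).choose 2 := Nat.choose_pos (by omega)
  omega

noncomputable def vidxEquiv (e : ℕ) : VIdx e ≃ ↑(pairs1 e) where
  toFun q := ⟨((q.1.1 : ℕ), (q.1.2 : ℕ)), by
    rw [pairs1, Finset.mem_erase, mem_pairsLe]
    refine ⟨?_, q.2.2⟩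
    have h := q.2.1
    intro hc
    rw [Prod.mk.injEq] at hc
    omega⟩
  invFun q := ⟨(⟨q.1.1, by have := mem_pairsLe.mp (Finset.mem_of_mem_erase q.2); omega⟩,
                ⟨q.1.2, by have := mem_pairsLe.mp (Finset.mem_of_mem_erase q.2); omega⟩), by
    have h1 := mem_pairsLe.mp (Finset.mem_of_mem_erase q.2)
    have h2 := Finset.ne_of_mem_erase q.2
    simp only []
    constructor
    · by_contra hc
      push_neg at hc
      apply h2
      have : q.1.1 = 0 ∧ q.1.2 = 0 := by omega
      ext <;> simp [this.1, this.2]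
    · exact h1⟩
  left_inv q := by ext <;> rfl
  right_inv q := by ext <;> rfl

lemma card_vidx (e : ℕ) : Fintype.card (VIdx e) + 1 = (e+2).choose 2 := by
  rw [Fintype.card_congr (vidxEquiv e), Fintype.card_coe, card_pairs1]

/-! ### Total degree of products over a domain -/

section
variable {σ : Type*} [DecidableEq σ] {R : Type*} [CommRing R] [IsDomain R]

omit [DecidableEq σ] [IsDomain R] in
lemma hc_top_ne_zero {p : MvPolynomial σ R} (hp : p ≠ 0) :
    homogeneousComponent p.totalDegree p ≠ 0 := by
  obtain ⟨d, hd, hdeg⟩ := Finset.exists_mem_eq_sup p.support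
    (support_nonempty.mpr hp) (fun s => s.sum fun _ e => e)
  intro h
  have hc : coeff d (homogeneousComponent p.totalDegree p) = coeff d p := by
    rw [coeff_homogeneousComponent, if_pos]
    rw [Finsupp.degree, totalDegree, hdeg]
    rfl
  rw [h] at hc
  exact (mem_support_iff.mp hd) hc.symm

omit [DecidableEq σ] [IsDomain R] in
lemma mem_support_hc_degree {n : ℕ} {p : MvPolynomial σ R} {d : σ →₀ ℕ}
    (hd : d ∈ (homogeneousComponent n p).support) : (d.sum fun _ e => e) = n := by
  have h1 := (homogeneousComponent_isHomogeneous n p) (mem_support_iff.mp hd)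
  have h2 : Finsupp.degree d = n := by rw [Finsupp.degree_eq_weight_one]; exact h1
  exact h2

omit [IsDomain R] in
lemma deg_sub_hc_lt {p : MvPolynomial σ R}
    (hp : p - homogeneousComponent p.totalDegree p ≠ 0) :
    (p - homogeneousComponent p.totalDegree p).totalDegree < p.totalDegree := by
  set P := homogeneousComponent p.totalDegree p with hP
  have hpos : 0 < p.totalDegree := by
    rcases Nat.eq_zero_or_pos p.totalDegree with h0 | h
    · exfalso
      apply hp
      have h1 := homogeneousComponent_of_mem (m := 0)
        ((mem_homogeneousSubmodule _ _).mpr (isHomogeneous_of_totalDegree_zero (σ := σ) h0))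
      rw [if_pos rfl] at h1
      rw [hP, h0, h1, sub_self]
    · exact h
  rw [totalDegree, Finset.sup_lt_iff (by simpa using hpos)]
  intro d hd
  have hle : (d.sum fun _ e => e) ≤ p.totalDegree := by
    have hsub : (p - P).support ⊆ p.support ∪ P.support := support_sub σ p P
    rcases Finset.mem_union.mp (hsub hd) with h | h
    · exact le_totalDegree h
    · exact le_of_eq (mem_support_hc_degree h)
  have hne : (d.sum fun _ e => e) ≠ p.totalDegree := by
    intro heq
    have : coeff d (p - P) = 0 := by
      rw [coeff_sub, hP, coeff_homogeneousComponent, if_pos, sub_self]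
      rw [Finsupp.degree, ← heq]; rfl
    exact (mem_support_iff.mp hd) this
  omega

lemma totalDegree_mul_eq {p q : MvPolynomial σ R} (hp : p ≠ 0) (hq : q ≠ 0) :
    (p * q).totalDegree = p.totalDegree + q.totalDegree := by
  refine le_antisymm (totalDegree_mul p q) ?_
  set a := p.totalDegree
  set b := q.totalDegree
  set P := homogeneousComponent a p with hP
  set Q := homogeneousComponent b q with hQ
  have hPQhom : P * Q ∈ homogeneousSubmodule σ R (a + b) :=
    (mem_homogeneousSubmodule _ _).mpr
      ((homogeneousComponent_isHomogeneous a p).mul (homogeneousComponent_isHomogeneous b q))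
  have hPQ : P * Q ≠ 0 := mul_ne_zero (hc_top_ne_zero hp) (hc_top_ne_zero hq)
  have key : homogeneousComponent (a + b) (p * q) = P * Q := by
    have hsplit : p * q = (p - P) * q + P * (q - Q) + P * Q := by ring
    have hz1 : homogeneousComponent (a + b) ((p - P) * q) = 0 := by
      rcases eq_or_ne (p - P) 0 with h | h
      · rw [h, zero_mul]; exact map_zero _
      · refine homogeneousComponent_eq_zero _ _ ?_
        calc ((p - P) * q).totalDegree ≤ (p - P).totalDegree + b := totalDegree_mul _ _
          _ < a + b := by have h2 := deg_sub_hc_lt h; rw [← hP] at h2; omega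
    have hz2 : homogeneousComponent (a + b) (P * (q - Q)) = 0 := by
      rcases eq_or_ne (q - Q) 0 with h | h
      · rw [h, mul_zero]; exact map_zero _
      · refine homogeneousComponent_eq_zero _ _ ?_
        have hPle : P.totalDegree ≤ a := by
          rw [hP, totalDegree]
          exact Finset.sup_le (fun d hd => le_of_eq (mem_support_hc_degree hd))
        calc (P * (q - Q)).totalDegree ≤ P.totalDegree + (q - Q).totalDegree :=
            totalDegree_mul _ _
          _ < a + b := by have h2 := deg_sub_hc_lt h; rw [← hQ] at h2; omega
    rw [hsplit, map_add, map_add, hz1, hz2, homogeneousComponent_of_mem hPQhom, if_pos rfl,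
      zero_add, zero_add]
  by_contra hlt
  push_neg at hlt
  exact hPQ (key ▸ homogeneousComponent_eq_zero _ _ hlt)

end

end Stmt7Aux

namespace Stmt7Aux

open MvPolynomial

/-- exponent finsupp attached to a Veronese index -/
def msupp {e : ℕ} (q : VIdx e) : Fin 2 →₀ ℕ :=
  Finsupp.single 0 (q.1.1 : ℕ) + Finsupp.single 1 (q.1.2 : ℕ)

lemma msupp_apply0 {e : ℕ} (q : VIdx e) : msupp q 0 = (q.1.1 : ℕ) := by
  simp [msupp, Finsupp.single_apply]

lemma msupp_apply1 {e : ℕ} (q : VIdx e) : msupp q 1 = (q.1.2 : ℕ) := by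
  simp [msupp, Finsupp.single_apply]

lemma msupp_ne_zero {e : ℕ} (q : VIdx e) : msupp q ≠ 0 := by
  intro h
  have h0 : msupp q 0 = 0 := by rw [h]; rfl
  have h1 : msupp q 1 = 0 := by rw [h]; rfl
  rw [msupp_apply0] at h0
  rw [msupp_apply1] at h1
  have := q.2.1
  omega

lemma msupp_inj {e : ℕ} : Function.Injective (msupp (e := e)) := by
  intro q q' h
  have h0 : (q.1.1 : ℕ) = (q'.1.1 : ℕ) := by rw [← msupp_apply0, ← msupp_apply0, h]
  have h1 : (q.1.2 : ℕ) = (q'.1.2 : ℕ) := by rw [← msupp_apply1, ← msupp_apply1, h]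
  apply Subtype.ext
  apply Prod.ext <;> [exact Fin.ext h0; exact Fin.ext h1]

lemma monomial_msupp_eq {e : ℕ} (q : VIdx e) :
    (monomial (msupp q) (1 : ℝ)) = X 0 ^ (q.1.1 : ℕ) * X 1 ^ (q.1.2 : ℕ) := by
  rw [X_pow_eq_monomial, X_pow_eq_monomial, monomial_mul, one_mul, msupp]

lemma eval_monomial_msupp {e : ℕ} (q : VIdx e) (v : Fin 2 → ℝ) :
    eval v (monomial (msupp q) (1 : ℝ)) = v 0 ^ (q.1.1 : ℕ) * v 1 ^ (q.1.2 : ℕ) := by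
  rw [monomial_msupp_eq]
  simp

lemma deg_monomial_msupp {e : ℕ} (q : VIdx e) :
    (monomial (msupp q) (1 : ℝ)) ∈ restrictTotalDegree (Fin 2) ℝ e := by
  rw [mem_restrictTotalDegree, totalDegree_monomial _ one_ne_zero, sum_fin2,
    msupp_apply0, msupp_apply1]
  exact q.2.2

lemma pi_dual_eq {ι : Type*} [Fintype ι] [DecidableEq ι]
    (φ : Module.Dual ℝ (ι → ℝ)) (x : ι → ℝ) :
    φ x = ∑ i, x i * φ (Pi.single i 1) := by
  conv_lhs => rw [← Finset.univ_sum_single x]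
  rw [map_sum]
  refine Finset.sum_congr rfl (fun i _ => ?_)
  have : Pi.single i (x i) = x i • (Pi.single i 1 : ι → ℝ) := by
    funext j
    rcases eq_or_ne j i with rfl | hne
    · simp
    · simp [Pi.single_apply, hne]
  rw [this, map_smul, smul_eq_mul]

lemma aeval_eq_eval' (v : Fin 2 → ℝ) (p : MvPolynomial (Fin 2) ℝ) :
    aeval v p = eval v p := by
  rw [← coe_aeval_eq_eval]; rfl

end Stmt7Aux

set_option maxHeartbeats 2000000 in
open Stmt7Aux MvPolynomial in
theorem stmt_7 (e f : ℕ) (he : 1 ≤ e) (hef : e < f)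
    (F : AffineSubspace ℝ (VIdx e → ℝ)) (hF : F ≠ ⊤)
    (A : Finset (ℝ × ℝ)) (hcard : A.card = Nat.choose (f + 2) 2)
    (hA : ∀ C : Set (ℝ × ℝ), IsCurveLe f C → ¬(↑A ⊆ C)) :
    ((vero e '' ↑A ∩ ↑F).ncard : ℤ) ≤
      (Nat.choose (f + 2) 2 : ℤ) - Nat.choose (f - e + 2) 2
        - Nat.choose (e + 2) 2 + 2 + fdim F := by
  classical
  -- a key arithmetic identity
  have harith0 := choose_arith (f - e) e
  rw [show f - e + e = f by omega] at harith0
  obtain ⟨P0, hP0⟩ : ∃ P, e * (f - e) = P := ⟨_, rfl⟩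
  rw [hP0] at harith0
  -- trivial case: F empty
  rcases eq_or_ne F ⊥ with hbot | hneF
  · rw [hbot]
    have h1 : (vero e '' ↑A ∩ ((⊥ : AffineSubspace ℝ (VIdx e → ℝ)) : Set (VIdx e → ℝ))).ncard = 0 := by
      rw [AffineSubspace.bot_coe, Set.inter_empty, Set.ncard_empty]
    have h2 : fdim (⊥ : AffineSubspace ℝ (VIdx e → ℝ)) = 0 := by
      rw [fdim, AffineSubspace.direction_bot, finrank_bot]
    rw [h1, h2]
    push_cast
    omega
  obtain ⟨x₀, hx₀⟩ := (AffineSubspace.nonempty_iff_ne_bot F).mpr hneF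
  -- the subset of A mapped into F
  set S : Finset (ℝ × ℝ) := A.filter (fun a => vero e a ∈ F) with hS
  have hSA : S ⊆ A := Finset.filter_subset _ _
  -- Veronese map is injective
  have hveroinj : Function.Injective (vero e) := by
    intro a b h
    have m1 : (1 : ℕ) ≤ 1 + 0 ∧ 1 + 0 ≤ e := by omega
    have m2 : (1 : ℕ) ≤ 0 + 1 ∧ 0 + 1 ≤ e := by omega
    have h1 := congrFun h ⟨(⟨1, by omega⟩, ⟨0, by omega⟩), by simpa using m1⟩
    have h2 := congrFun h ⟨(⟨0, by omega⟩, ⟨1, by omega⟩), by simpa using m2⟩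
    simp only [vero, pow_one, pow_zero, mul_one, one_mul] at h1 h2
    exact Prod.ext h1 h2
  -- rewrite the LHS
  have himg : vero e '' ↑A ∩ ↑F = vero e '' ↑S := by
    ext x
    constructor
    · rintro ⟨⟨a, ha, rfl⟩, hxF⟩
      refine ⟨a, ?_, rfl⟩
      rw [hS]
      simp only [Finset.coe_filter, Set.mem_setOf_eq]
      exact ⟨Finset.mem_coe.mp ha, hxF⟩
    · rintro ⟨a, ha, rfl⟩
      rw [hS] at ha
      simp only [Finset.coe_filter, Set.mem_setOf_eq] at ha
      exact ⟨⟨a, ha.1, rfl⟩, ha.2⟩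
  rw [himg, Set.ncard_image_of_injective _ hveroinj, Set.ncard_coe_finset]
  -- the linear map from dual functionals to polynomials
  set QL : Module.Dual ℝ (VIdx e → ℝ) →ₗ[ℝ] MvPolynomial (Fin 2) ℝ :=
    (∑ q : VIdx e, (LinearMap.applyₗ (Pi.single q 1)).smulRight ((monomial (msupp q) (1 : ℝ)))) -
      (LinearMap.applyₗ x₀).smulRight (1 : MvPolynomial (Fin 2) ℝ) with hQL
  have hQLapply : ∀ φ, QL φ =
      (∑ q : VIdx e, φ (Pi.single q 1) • monomial (msupp q) (1 : ℝ)) - φ x₀ • 1 := by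
    intro φ
    simp [hQL, LinearMap.sub_apply, LinearMap.sum_apply]
  have heval : ∀ (φ) (a : ℝ × ℝ), eval ![a.1, a.2] (QL φ) = φ (vero e a) - φ x₀ := by
    intro φ a
    rw [hQLapply, map_sub, map_sum, pi_dual_eq φ (vero e a)]
    congr 1
    · refine Finset.sum_congr rfl (fun q _ => ?_)
      rw [smul_eval, eval_monomial_msupp]
      simp only [Matrix.cons_val_zero, Matrix.cons_val_one, Matrix.head_cons]
      rw [vero]
      ring
    · rw [smul_eval, map_one, mul_one]
  have hdegQL : ∀ φ, QL φ ∈ restrictTotalDegree (Fin 2) ℝ e := by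
    intro φ
    rw [hQLapply]
    refine sub_mem (Submodule.sum_mem _ (fun q _ => Submodule.smul_mem _ _ (deg_monomial_msupp q)))
      (Submodule.smul_mem _ _ ?_)
    rw [mem_restrictTotalDegree, totalDegree_one]
    exact Nat.zero_le _
  have hcoeffQL : ∀ φ q, coeff (msupp q) (QL φ) = φ (Pi.single q 1) := by
    intro φ q
    rw [hQLapply, coeff_sub, coeff_sum]
    have hconst : coeff (msupp q) ((φ x₀) • (1 : MvPolynomial (Fin 2) ℝ)) = 0 := by
      rw [coeff_smul, coeff_one, if_neg (fun h => msupp_ne_zero q h.symm), smul_zero]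
    rw [hconst, sub_zero]
    rw [Finset.sum_eq_single_of_mem q (Finset.mem_univ q)]
    · rw [coeff_smul, coeff_monomial, if_pos rfl, smul_eq_mul, mul_one]
    · intro q' _ hq'
      rw [coeff_smul, coeff_monomial, if_neg (fun h => hq' (msupp_inj h)), smul_zero]
  have hQL0 : ∀ φ, QL φ = 0 → φ = 0 := by
    intro φ h
    apply LinearMap.ext
    intro x
    rw [pi_dual_eq φ x, LinearMap.zero_apply]
    refine Finset.sum_eq_zero (fun q _ => ?_)
    rw [← hcoeffQL φ q, h]
    simp
  have hQLinj : Function.Injective QL := by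
    intro φ ψ h
    have := hQL0 (φ - ψ) (by rw [map_sub, h, sub_self])
    exact sub_eq_zero.mp this
  -- the space of functionals vanishing on F
  set V' : Submodule ℝ (Module.Dual ℝ (VIdx e → ℝ)) := (F.direction).dualAnnihilator with hV'
  set V : Submodule ℝ (MvPolynomial (Fin 2) ℝ) := V'.map QL with hV
  have hdimV' : Module.finrank ℝ V' + fdim F = Fintype.card (VIdx e) := by
    have e1 : Module.finrank ℝ ((VIdx e → ℝ) ⧸ F.direction) = Module.finrank ℝ V' :=
      (Subspace.quotEquivAnnihilator F.direction).finrank_eq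
    have e2 := Submodule.finrank_quotient_add_finrank F.direction
    rw [Module.finrank_fintype_fun_eq_card] at e2
    have : fdim F = Module.finrank ℝ F.direction := rfl
    omega
  have hdimV : Module.finrank ℝ V = Module.finrank ℝ V' :=
    ((Submodule.equivMapOfInjective QL hQLinj V').finrank_eq).symm
  have hklt : fdim F < Fintype.card (VIdx e) := by
    have hdir : F.direction ≠ ⊤ := by
      intro h
      exact hF ((AffineSubspace.direction_eq_top_iff_of_nonempty ⟨x₀, hx₀⟩).mp h)
    have := Submodule.finrank_lt (K := ℝ) (V := VIdx e → ℝ) hdir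
    rwa [Module.finrank_fintype_fun_eq_card] at this
  -- pick a nonzero element of V
  have hVne : V ≠ ⊥ := by
    intro h
    rw [h, finrank_bot] at hdimV
    omega
  obtain ⟨p₀, hp₀V, hp₀⟩ := (Submodule.ne_bot_iff V).mp hVne
  obtain ⟨φ₀, hφ₀, hφ₀p⟩ := Submodule.mem_map.mp hp₀V
  -- elements of V vanish on S and have degree between 1 and e
  have hVdeg : ∀ p ∈ V, p ∈ restrictTotalDegree (Fin 2) ℝ e := by
    rintro p hp
    obtain ⟨φ, _, rfl⟩ := Submodule.mem_map.mp hp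
    exact hdegQL φ
  have hvan : ∀ p ∈ V, ∀ a ∈ S, eval ![a.1, a.2] p = 0 := by
    rintro p hp a ha
    obtain ⟨φ, hφ, rfl⟩ := Submodule.mem_map.mp hp
    rw [heval]
    have haF : vero e a ∈ F := (Finset.mem_filter.mp ha).2
    have hdir : vero e a - x₀ ∈ F.direction := by
      have := AffineSubspace.vsub_mem_direction haF hx₀
      rwa [vsub_eq_sub] at this
    have := (Submodule.mem_dualAnnihilator φ).mp hφ _ hdir
    rw [map_sub] at this
    exact this
  -- degree of p₀
  set d : ℕ := p₀.totalDegree with hd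
  have hde : d ≤ e := (mem_restrictTotalDegree _ _ _).mp (hVdeg p₀ hp₀V)
  have hd1 : 1 ≤ d := by
    by_contra hlt
    have hd0 : p₀.totalDegree = 0 := by omega
    apply hp₀
    rw [← hφ₀p]
    have hφ0 : φ₀ = 0 := by
      apply LinearMap.ext
      intro x
      rw [pi_dual_eq φ₀ x, LinearMap.zero_apply]
      refine Finset.sum_eq_zero (fun q _ => ?_)
      have hcz : coeff (msupp q) p₀ = 0 := by
        by_contra hc
        have hmem : msupp q ∈ p₀.support := mem_support_iff.mpr hc
        have := (totalDegree_eq_zero_iff (Fin 2) p₀).mp hd0 _ hmem 0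
        rw [msupp_apply0] at this
        have := (totalDegree_eq_zero_iff (Fin 2) p₀).mp hd0 _ hmem 1
        rw [msupp_apply1] at this
        have hq := q.2.1
        omega
      rw [← hφ₀p, hcoeffQL] at hcz
      rw [hcz, mul_zero]
    rw [hφ0, map_zero]
  -- multiplication by p₀
  set mulP : MvPolynomial (Fin 2) ℝ →ₗ[ℝ] MvPolynomial (Fin 2) ℝ := LinearMap.mulLeft ℝ p₀
    with hmulP
  have hmul_inj : Function.Injective mulP := by
    intro r s h
    simp only [hmulP, LinearMap.mulLeft_apply] at h
    exact mul_left_cancel₀ hp₀ h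
  set M : Submodule ℝ (MvPolynomial (Fin 2) ℝ) :=
    (restrictTotalDegree (Fin 2) ℝ (f - d)).map mulP with hM
  haveI : Module.Finite ℝ M := Module.Finite.map _ _
  haveI : Module.Finite ℝ V' := inferInstance
  haveI : Module.Finite ℝ V := Module.Finite.map _ _
  have hdimM : Module.finrank ℝ M = ((f - d) + 2).choose 2 :=
    ((Submodule.equivMapOfInjective mulP hmul_inj _).finrank_eq).symm.trans (finrank_rtd _)
  -- membership bounds
  have hMle : M ≤ restrictTotalDegree (Fin 2) ℝ f := by
    rintro x hx
    obtain ⟨r, hr, rfl⟩ := Submodule.mem_map.mp hx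
    simp only [hmulP, LinearMap.mulLeft_apply]
    rw [mem_restrictTotalDegree]
    refine le_trans (totalDegree_mul _ _) ?_
    have hr' := (mem_restrictTotalDegree _ _ _).mp hr
    omega
  have hVle : V ≤ restrictTotalDegree (Fin 2) ℝ f := by
    intro x hx
    rw [mem_restrictTotalDegree]
    have := (mem_restrictTotalDegree _ _ _).mp (hVdeg x hx)
    omega
  -- the intersection is small
  have hinf : M ⊓ V ≤ (restrictTotalDegree (Fin 2) ℝ (e - d)).map mulP := by
    rintro x ⟨hxM, hxV⟩
    obtain ⟨r, hr, rfl⟩ := Submodule.mem_map.mp hxM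
    rcases eq_or_ne r 0 with rfl | hr0
    · rw [map_zero]
      exact Submodule.zero_mem _
    refine Submodule.mem_map.mpr ⟨r, ?_, rfl⟩
    rw [mem_restrictTotalDegree]
    have hdeg : (p₀ * r).totalDegree ≤ e := by
      have h' := (mem_restrictTotalDegree _ _ _).mp (hVdeg _ hxV)
      simpa [hmulP, LinearMap.mulLeft_apply] using h'
    rw [totalDegree_mul_eq hp₀ hr0] at hdeg
    omega
  haveI : Module.Finite ℝ ((restrictTotalDegree (Fin 2) ℝ (e - d)).map mulP) :=
    Module.Finite.map _ _
  have hdim_inf : Module.finrank ℝ ↥(M ⊓ V) ≤ ((e - d) + 2).choose 2 := by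
    refine le_trans (Submodule.finrank_mono hinf) (le_of_eq ?_)
    exact ((Submodule.equivMapOfInjective mulP hmul_inj _).finrank_eq).symm.trans (finrank_rtd _)
  have hsup := Submodule.finrank_sup_add_finrank_inf_eq M V
  -- evaluation injectivity on polynomials of degree ≤ f
  have hAne : A.Nonempty := by
    rw [← Finset.card_pos, hcard]
    exact Nat.choose_pos (by omega)
  have hEinj0 : ∀ p ∈ restrictTotalDegree (Fin 2) ℝ f,
      (∀ a ∈ A, eval ![a.1, a.2] p = 0) → p = 0 := by
    intro p hp hz
    by_contra hne
    rcases Nat.eq_zero_or_pos p.totalDegree with h0 | hpos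
    · obtain ⟨a, ha⟩ := hAne
      have hza := hz a ha
      have hCp : p = C (coeff 0 p) := by
        ext m
        rcases eq_or_ne m 0 with rfl | hm
        · simp
        · rw [coeff_C, if_neg (fun h => hm h.symm)]
          by_contra hc
          have hmem : m ∈ p.support := mem_support_iff.mpr hc
          have hall := (totalDegree_eq_zero_iff (Fin 2) p).mp h0 _ hmem
          exact hm (Finsupp.ext fun i => hall i)
      rw [hCp, eval_C] at hza
      apply hne
      rw [hCp, hza, map_zero]
    · refine hA (zeroSet p) ⟨p.totalDegree, hpos, (mem_restrictTotalDegree _ _ _).mp hp,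
        p, rfl, rfl⟩ ?_
      intro x hx
      exact hz x hx
  -- evaluation map on the sup, restricted to A \ S
  set E : ↥(M ⊔ V) →ₗ[ℝ] (↑(A \ S) → ℝ) :=
    LinearMap.pi (fun b => ((aeval ![(b : ℝ × ℝ).1, (b : ℝ × ℝ).2]).toLinearMap).comp
      (M ⊔ V).subtype) with hE
  have hWvan : ∀ w : ↥(M ⊔ V), ∀ a ∈ S, eval ![a.1, a.2] (w : MvPolynomial (Fin 2) ℝ) = 0 := by
    rintro w a ha
    obtain ⟨m, hm, v, hv, hmv⟩ := Submodule.mem_sup.mp w.2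
    rw [← hmv, map_add]
    obtain ⟨r, _, rfl⟩ := Submodule.mem_map.mp hm
    simp only [hmulP, LinearMap.mulLeft_apply]
    rw [map_mul, hvan p₀ hp₀V a ha, zero_mul, hvan v hv a ha, add_zero]
  have hEinj : Function.Injective E := by
    have hker : ∀ w : ↥(M ⊔ V), E w = 0 → w = 0 := by
      intro w hw
      have hzero : (w : MvPolynomial (Fin 2) ℝ) = 0 := by
        refine hEinj0 _ (sup_le hMle hVle w.2) (fun a ha => ?_)
        by_cases haS : a ∈ S
        · exact hWvan w a haS
        · have hmem : a ∈ A \ S := Finset.mem_sdiff.mpr ⟨ha, haS⟩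
          have := congrFun hw ⟨a, hmem⟩
          simp only [hE, LinearMap.pi_apply, LinearMap.comp_apply, Submodule.subtype_apply,
            AlgHom.toLinearMap_apply, Pi.zero_apply] at this
          rwa [aeval_eq_eval'] at this
      exact Subtype.ext hzero
    intro w w' h
    have := hker (w - w') (by rw [map_sub, h, sub_self])
    exact sub_eq_zero.mp this
  have hfinW : Module.finrank ℝ ↥(M ⊔ V) ≤ (A \ S).card := by
    refine le_trans (LinearMap.finrank_le_finrank_of_injective hEinj) (le_of_eq ?_)
    rw [Module.finrank_fintype_fun_eq_card, Fintype.card_coe]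
  have hcards : (A \ S).card = A.card - S.card := by
    rw [Finset.card_sdiff, Finset.inter_eq_left.mpr hSA]
  have hSle : S.card ≤ A.card := Finset.card_le_card hSA
  -- final arithmetic
  have hq1 := card_vidx e
  have harith := choose_arith (f - e) (e - d)
  rw [show f - e + (e - d) = f - d by omega] at harith
  obtain ⟨Pr, hPr⟩ : ∃ P, (e - d) * (f - e) = P := ⟨_, rfl⟩
  rw [hPr] at harith
  have hfact : fdim F = fdim F := rfl
  omega
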